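/- Let L be a finite join-semidistributive lattice and let j be a join-irreducible element of L such that K(j) has no greatest element. Let X be the set of join-irreducible elements j' ≠ j such that {j, j'} is a face of the canonical join complex. Let A be a nonempty antichain contained in X with ⋁A ∨ j = ⋁A ∨ j_* that is minimal in join-refinement among all antichains Y ⊆ X with ⋁Y ∨ j = ⋁Y ∨ j_*. Then every two-element subset of A is a face of the canonical join complex of L. -/

import Mathlib

universe u v

def JoinSemidistrib (α : Type*) [Lattice α] : Prop :=
  ∀ x y z : α, x ⊔ y = x ⊔ z → x ⊔ (y ⊓ z) = x ⊔ y

def MeetSemidistrib (α : Type*) [Lattice α] : Prop :=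
  ∀ x y z : α, x ⊓ y = x ⊓ z → x ⊓ (y ⊔ z) = x ⊓ y

section JoinDefs

variable {α : Type*} [Lattice α] [OrderBot α]

/-- `j` is join-irreducible: not the bottom element, and `j = a ⊔ b` implies `j = a` or `j = b`. -/
def JoinIrred (j : α) : Prop :=
  j ≠ ⊥ ∧ ∀ a b : α, j = a ⊔ b → j = a ∨ j = b

/-- `A` join-refines `B`: every element of `A` is below some element of `B`. -/
def JoinRefines (A B : Finset α) : Prop :=
  ∀ a ∈ A, ∃ b ∈ B, a ≤ b

/-- `A` is an irredundant join representation of `w`. -/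
def IrredJoinRep (A : Finset α) (w : α) : Prop :=
  A.sup id = w ∧ ∀ A' ⊂ A, A'.sup id < w

/-- `A` is the canonical join representation of `w`: the irredundant join representation
of `w` that join-refines every irredundant join representation of `w`. -/
def CanonicalJoinRep (A : Finset α) (w : α) : Prop :=
  IrredJoinRep A w ∧ ∀ B : Finset α, IrredJoinRep B w → JoinRefines A B

/-- `A` joins canonically, i.e. `A` is a face of the canonical join complex. -/
def JoinsCanonically (A : Finset α) : Prop :=
  CanonicalJoinRep A (A.sup id)

/-- `j` is a canonical joinand of `w`. -/
def CanonicalJoinand (j w : α) : Prop :=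
  ∃ A : Finset α, CanonicalJoinRep A w ∧ j ∈ A

end JoinDefs

/-- The canonical join complex is flag: any finite set of join-irreducible elements all of
whose two-element subsets are faces is itself a face. -/
def FlagCanonicalJoinComplex (α : Type*) [Lattice α] [OrderBot α] [DecidableEq α] : Prop :=
  ∀ F : Finset α, (∀ j ∈ F, JoinIrred j) →
    (∀ j ∈ F, ∀ j' ∈ F, j ≠ j' → JoinsCanonically ({j, j'} : Finset α)) →
    JoinsCanonically F

/-- A lattice is crosscut-simplicial if for every `x ≤ y` and every proper subset `S` of the
set of atoms of the interval `[x, y]` (elements `a` with `x ⋖ a` and `a ≤ y`), the join of `x`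
with all elements of `S` is strictly less than `y`. -/
def CrosscutSimplicial (β : Type*) [Lattice β] : Prop :=
  ∀ x y : β, x ≤ y → ∀ S : Finset β,
    (∀ a ∈ S, x ⋖ a ∧ a ≤ y) →
    (∃ a : β, (x ⋖ a ∧ a ≤ y) ∧ a ∉ S) →
    S.fold (· ⊔ · : β → β → β) x id < y

section MeetDefs

variable {α : Type*} [Lattice α] [OrderTop α]

/-- `m` is meet-irreducible: not the top element, and `m = a ⊓ b` implies `m = a` or `m = b`. -/
def MeetIrred (m : α) : Prop :=
  m ≠ ⊤ ∧ ∀ a b : α, m = a ⊓ b → m = a ∨ m = b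

/-- `A` meet-refines `B`: every element of `A` is above some element of `B`. -/
def MeetRefines (A B : Finset α) : Prop :=
  ∀ a ∈ A, ∃ b ∈ B, b ≤ a

/-- `A` is an irredundant meet representation of `w`. -/
def IrredMeetRep (A : Finset α) (w : α) : Prop :=
  A.inf id = w ∧ ∀ A' ⊂ A, w < A'.inf id

/-- `A` is the canonical meet representation of `w`. -/
def CanonicalMeetRep (A : Finset α) (w : α) : Prop :=
  IrredMeetRep A w ∧ ∀ B : Finset α, IrredMeetRep B w → MeetRefines A B

/-- `A` meets canonically, i.e. `A` is a face of the canonical meet complex. -/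
def MeetsCanonically (A : Finset α) : Prop :=
  CanonicalMeetRep A (A.inf id)

end MeetDefs

/-- The canonical meet complex is flag. -/
def FlagCanonicalMeetComplex (α : Type*) [Lattice α] [OrderTop α] [DecidableEq α] : Prop :=
  ∀ F : Finset α, (∀ m ∈ F, MeetIrred m) →
    (∀ m ∈ F, ∀ m' ∈ F, m ≠ m' → MeetsCanonically ({m, m'} : Finset α)) →
    MeetsCanonically F


section AuxProof
open Finset
open scoped Classical

lemma Finset.exists_maximal_old {β : Type*} [PartialOrder β] (s : Finset β) (hs : s.Nonempty) :
    ∃ m ∈ s, ∀ x ∈ s, ¬ m < x := by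
  obtain ⟨m, hm⟩ := Finset.exists_maximal hs
  exact ⟨m, hm.1, fun y hy hlt => hlt.not_ge (hm.2 hy hlt.le)⟩

lemma Finset.exists_minimal_old {β : Type*} [PartialOrder β] (s : Finset β) (hs : s.Nonempty) :
    ∃ m ∈ s, ∀ x ∈ s, ¬ x < m := by
  obtain ⟨m, hm⟩ := Finset.exists_minimal hs
  exact ⟨m, hm.1, fun y hy hlt => hlt.not_ge (hm.2 hy hlt.le)⟩

variable {α : Type*} [Lattice α] [OrderBot α] [Fintype α] [DecidableEq α]

/-- join of all elements strictly below `d` -/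
noncomputable def sstar (d : α) : α := (Finset.univ.filter (· < d)).sup id

lemma le_sstar {d x : α} (h : x < d) : x ≤ sstar d :=
  Finset.le_sup (f := id) (by simp [h])

lemma sstar_le {d : α} : sstar d ≤ d :=
  Finset.sup_le (by intro x hx; simp only [Finset.mem_filter] at hx; exact le_of_lt hx.2)

lemma joinIrred_mem_of_sup {d : α} (hd : JoinIrred d) :
    ∀ S : Finset α, S.sup id = d → d ∈ S := by
  intro S
  induction S using Finset.induction with
  | empty => intro h; simp at h; exact absurd h.symm hd.1
  | @insert a S ha IH =>
    intro h
    rw [Finset.sup_insert] at h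
    rcases hd.2 a (S.sup id) h.symm with h1 | h2
    · exact Finset.mem_insert.mpr (Or.inl h1)
    · exact Finset.mem_insert.mpr (Or.inr (IH h2.symm))

lemma sstar_lt {d : α} (hd : JoinIrred d) : sstar d < d := by
  rcases lt_or_eq_of_le (sstar_le (d := d)) with h | h
  · exact h
  · exfalso
    have := joinIrred_mem_of_sup hd _ h
    simp only [Finset.mem_filter] at this
    exact lt_irrefl d this.2

lemma lt_le_star {j jstar x : α} (hj : JoinIrred j) (hstar : jstar ⋖ j) (h : x < j) :
    x ≤ jstar := by
  have h1 : x ⊔ jstar ≤ j := sup_le h.le hstar.lt.le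
  have h2 : x ⊔ jstar ≠ j := by
    intro he
    rcases hj.2 x jstar he.symm with h3 | h3
    · exact absurd h3.symm h.ne
    · exact absurd h3.symm hstar.lt.ne
  have h3 : ¬ jstar < x ⊔ jstar := fun hc => hstar.2 hc (lt_of_le_of_ne h1 h2)
  rcases lt_or_eq_of_le (le_sup_right : jstar ≤ x ⊔ jstar) with hl | heq
  · exact (h3 hl).elim
  · exact le_sup_left.trans heq.ge

/-- minimal `x` with `x ⊔ u = w` (exists by join-semidistributivity) -/
noncomputable def jmin (w u : α) : α :=
  if h : (Finset.univ.filter (fun x => x ⊔ u = w)).Nonempty then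
    (Finset.univ.filter (fun x => x ⊔ u = w)).inf' h id else ⊥

lemma inf'_join (hjsd : JoinSemidistrib α) (u w : α) (S : Finset α) (hne : S.Nonempty)
    (h : ∀ x ∈ S, x ⊔ u = w) : (S.inf' hne id) ⊔ u = w := by
  revert h
  induction hne using Finset.Nonempty.cons_induction with
  | singleton a => intro h; simpa using h a (by simp)
  | cons a S ha hS IH =>
    intro h
    rw [Finset.inf'_cons hS]
    rw [id_eq]
    have h1 : a ⊔ u = w := h a (by simp)
    have h2 : (S.inf' hS id) ⊔ u = w := IH (fun x hx => h x (Finset.mem_cons.mpr (Or.inr hx)))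
    have h3 : u ⊔ a = u ⊔ (S.inf' hS id) := by rw [sup_comm u a, sup_comm u _, h1, h2]
    have := hjsd u a (S.inf' hS id) h3
    rw [sup_comm] at this
    rw [this, sup_comm]
    exact h1

lemma jmin_spec (hjsd : JoinSemidistrib α) {w u : α} (h : u ≤ w) :
    jmin w u ⊔ u = w ∧ ∀ x : α, x ⊔ u = w → jmin w u ≤ x := by
  have hw : w ∈ Finset.univ.filter (fun x => x ⊔ u = w) := by simp [sup_eq_left.mpr h]
  have hne : (Finset.univ.filter (fun x : α => x ⊔ u = w)).Nonempty := ⟨w, hw⟩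
  rw [jmin, dif_pos hne]
  constructor
  · exact inf'_join hjsd u w _ hne (fun x hx => (Finset.mem_filter.mp hx).2)
  · intro x hx
    exact Finset.inf'_le id (by simp [hx])

lemma jmin_cover (hjsd : JoinSemidistrib α) {w m : α} (hm : m ⋖ w) : jmin w m ⊔ m = w :=
  (jmin_spec hjsd hm.lt.le).1

lemma jmin_min (hjsd : JoinSemidistrib α) {w m : α} (hm : m ⋖ w) {x : α} (hx : x ⊔ m = w) :
    jmin w m ≤ x :=
  (jmin_spec hjsd hm.lt.le).2 x hx

lemma jmin_le_w (hjsd : JoinSemidistrib α) {w m : α} (hm : m ⋖ w) : jmin w m ≤ w :=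
  le_sup_left.trans (jmin_cover hjsd hm).le

lemma jmin_joinIrred (hjsd : JoinSemidistrib α) {w m : α} (hm : m ⋖ w) :
    JoinIrred (jmin w m) := by
  constructor
  · intro h
    have := jmin_cover hjsd hm
    rw [h, bot_sup_eq] at this
    exact hm.lt.ne this
  · intro p q hpq
    have hpb : p ≤ jmin w m := hpq ▸ le_sup_left
    have hqb : q ≤ jmin w m := hpq ▸ le_sup_right
    have hbw := jmin_le_w hjsd hm
    rcases hm.eq_or_eq (le_sup_right : m ≤ p ⊔ m) (sup_le (hpb.trans hbw) hm.lt.le)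
        with h1 | h1
    · rcases hm.eq_or_eq (le_sup_right : m ≤ q ⊔ m) (sup_le (hqb.trans hbw) hm.lt.le)
          with h2 | h2
      · exfalso
        have hp : p ≤ m := le_sup_left.trans h1.le
        have hq : q ≤ m := le_sup_left.trans h2.le
        have hmm : jmin w m ⊔ m = m := by
          rw [hpq]; exact sup_eq_right.mpr (sup_le hp hq)
        rw [jmin_cover hjsd hm] at hmm
        exact hm.lt.ne hmm.symm
      · exact Or.inr (le_antisymm (jmin_min hjsd hm h2) hqb)
    · exact Or.inl (le_antisymm (jmin_min hjsd hm h1) hpb)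

/-- the set of `jmin w m` for lower covers `m` of `w` -/
noncomputable def Bw (w : α) : Finset α :=
  (Finset.univ.filter (· ⋖ w)).image (fun m => jmin w m)

lemma mem_Bw {w b : α} : b ∈ Bw w ↔ ∃ m, m ⋖ w ∧ jmin w m = b := by
  simp [Bw]

/-- the canonical join representation: maximal elements of `Bw w` -/
noncomputable def CJR (w : α) : Finset α :=
  (Bw w).filter (fun b => ∀ b' ∈ Bw w, b ≤ b' → b = b')

lemma CJR_subset_Bw {w : α} : CJR w ⊆ Bw w := Finset.filter_subset _ _

lemma CJR_chain {w c c' : α} (hc : c ∈ CJR w) (hc' : c' ∈ CJR w) (h : c ≤ c') : c = c' :=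
  (Finset.mem_filter.mp hc).2 c' (CJR_subset_Bw hc') h

lemma CJR_joinIrred (hjsd : JoinSemidistrib α) {w c : α} (hc : c ∈ CJR w) : JoinIrred c := by
  obtain ⟨m, hm, he⟩ := mem_Bw.mp (CJR_subset_Bw hc)
  exact he ▸ jmin_joinIrred hjsd hm

lemma CJR_le_w (hjsd : JoinSemidistrib α) {w c : α} (hc : c ∈ CJR w) : c ≤ w := by
  obtain ⟨m, hm, he⟩ := mem_Bw.mp (CJR_subset_Bw hc)
  exact he ▸ jmin_le_w hjsd hm

lemma CJR_refines (hjsd : JoinSemidistrib α) {w : α} {V : Finset α} (hV : V.sup id = w) :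
    ∀ c ∈ CJR w, ∃ v ∈ V, c ≤ v := by
  intro c hc
  obtain ⟨m, hm, he⟩ := mem_Bw.mp (CJR_subset_Bw hc)
  have hex : ∃ v ∈ V, ¬ v ≤ m := by
    by_contra hcon
    push_neg at hcon
    exact hm.lt.not_ge (hV ▸ Finset.sup_le hcon)
  obtain ⟨v, hv, hvm⟩ := hex
  have hvw : v ≤ w := hV ▸ Finset.le_sup (f := id) hv
  rcases hm.eq_or_eq (le_sup_right : m ≤ v ⊔ m) (sup_le hvw hm.lt.le) with h1 | h1
  · exact absurd (le_sup_left.trans h1.le) hvm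
  · exact ⟨v, hv, he ▸ jmin_min hjsd hm h1⟩

lemma exists_covBy_between {x w : α} (h : x < w) : ∃ m, x ≤ m ∧ m ⋖ w := by
  obtain ⟨m, hmS, hmax⟩ := Finset.exists_maximal_old
    (Finset.univ.filter (fun z => x ≤ z ∧ z < w)) ⟨x, by simp [h]⟩
  simp only [Finset.mem_filter, Finset.mem_univ, true_and] at hmS
  refine ⟨m, hmS.1, hmS.2, ?_⟩
  intro c hc1 hc2
  exact hmax c (by simp [hmS.1.trans hc1.le, hc2]) hc1

lemma CJR_sup (hjsd : JoinSemidistrib α) (w : α) : (CJR w).sup id = w := by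
  have hsle : (CJR w).sup id ≤ w := Finset.sup_le (fun c hc => CJR_le_w hjsd hc)
  rcases eq_or_lt_of_le hsle with h | h
  · exact h
  · exfalso
    obtain ⟨m, hsm, hm⟩ := exists_covBy_between h
    have hb0 : jmin w m ∈ Bw w := mem_Bw.mpr ⟨m, hm, rfl⟩
    obtain ⟨c, hcS, hmax⟩ := Finset.exists_maximal_old
      ((Bw w).filter (fun b => jmin w m ≤ b)) ⟨jmin w m, by simp [hb0]⟩
    have hcB : c ∈ Bw w := (Finset.mem_filter.mp hcS).1
    have hb0c : jmin w m ≤ c := (Finset.mem_filter.mp hcS).2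
    have hcCJR : c ∈ CJR w := by
      refine Finset.mem_filter.mpr ⟨hcB, ?_⟩
      intro b' hb' hcb'
      by_contra hne
      exact hmax b' (Finset.mem_filter.mpr ⟨hb', hb0c.trans hcb'⟩) (lt_of_le_of_ne hcb' hne)
    have hcm : c ≤ m := (Finset.le_sup (f := id) hcCJR).trans hsm
    have : m = w := by
      have := jmin_cover hjsd hm
      rwa [sup_eq_right.mpr (hb0c.trans hcm)] at this
    exact hm.lt.ne this

lemma CJR_irred (hjsd : JoinSemidistrib α) (w : α) : IrredJoinRep (CJR w) w := by
  refine ⟨CJR_sup hjsd w, ?_⟩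
  intro A' hA'
  have hle : A'.sup id ≤ w := (Finset.sup_mono hA'.subset).trans (CJR_sup hjsd w).le
  rcases eq_or_lt_of_le hle with h | h
  · exfalso
    obtain ⟨c, hcC, hcA'⟩ := Finset.exists_of_ssubset hA'
    obtain ⟨v, hv, hcv⟩ := CJR_refines hjsd h c hcC
    have := CJR_chain hcC (hA'.subset hv) hcv
    exact hcA' (this ▸ hv)
  · exact h

lemma CJR_canonical (hjsd : JoinSemidistrib α) (w : α) : CanonicalJoinRep (CJR w) w :=
  ⟨CJR_irred hjsd w, fun B hB c hc => CJR_refines hjsd hB.1 c hc⟩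

lemma irred_anti {S : Finset α} {w : α} (h : IrredJoinRep S w) {s s' : α}
    (hs : s ∈ S) (hs' : s' ∈ S) (hle : s ≤ s') : s = s' := by
  by_contra hne
  have hsub : S.erase s ⊂ S := Finset.erase_ssubset hs
  have hlt := h.2 _ hsub
  have hge : S.sup id ≤ (S.erase s).sup id := by
    apply Finset.sup_le
    intro t ht
    rcases eq_or_ne t s with rfl | htne
    · exact hle.trans (Finset.le_sup (f := id) (Finset.mem_erase.mpr ⟨fun he => hne he.symm, hs'⟩))
    · exact Finset.le_sup (f := id) (Finset.mem_erase.mpr ⟨htne, ht⟩)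
  rw [h.1] at hge
  exact lt_irrefl _ (lt_of_le_of_lt hge hlt)

lemma subset_joinsCanonically (hjsd : JoinSemidistrib α) {S T : Finset α}
    (hS : JoinsCanonically S) (hT : T ⊆ S) : JoinsCanonically T := by
  have hSanti : ∀ s ∈ S, ∀ s' ∈ S, s ≤ s' → s = s' := fun s hs s' hs' h =>
    irred_anti hS.1 hs hs' h
  -- construct a minimal (hence irredundant) join rep inside CJR (T.sup id) ∪ (S \ T)
  set R : Finset α := CJR (T.sup id) ∪ (S \ T) with hR
  have hRsup : R.sup id = S.sup id := by
    rw [hR, Finset.sup_union, CJR_sup hjsd]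
    conv_rhs => rw [← Finset.union_sdiff_of_subset hT, Finset.sup_union]
  obtain ⟨R', hR'P, hmin⟩ := Finset.exists_minimal_old
    (R.powerset.filter (fun Z => Z.sup id = S.sup id))
    ⟨R, by simp [hRsup]⟩
  have hR'R : R' ⊆ R := Finset.mem_powerset.mp (Finset.mem_filter.mp hR'P).1
  have hR'sup : R'.sup id = S.sup id := (Finset.mem_filter.mp hR'P).2
  have hirr : IrredJoinRep R' (S.sup id) := by
    refine ⟨hR'sup, ?_⟩
    intro A' hA'
    have hle : A'.sup id ≤ S.sup id := (Finset.sup_mono hA'.subset).trans hR'sup.le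
    rcases eq_or_lt_of_le hle with he | hlt
    · exact absurd hA' (hmin A' (Finset.mem_filter.mpr
        ⟨Finset.mem_powerset.mpr (hA'.subset.trans hR'R), he⟩))
    · exact hlt
  have href := hS.2 R' hirr
  have hTD : T ⊆ CJR (T.sup id) := by
    intro t ht
    obtain ⟨r, hrR', htr⟩ := href t (hT ht)
    rcases Finset.mem_union.mp (hR'R hrR') with hrD | hrST
    · obtain ⟨t', ht', hrt'⟩ := CJR_refines hjsd (rfl : T.sup id = T.sup id) r hrD
      have htt' : t = t' := hSanti t (hT ht) t' (hT ht') (htr.trans hrt')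
      have : t = r := le_antisymm htr (htt' ▸ hrt')
      exact this ▸ hrD
    · exfalso
      have hrS := Finset.mem_sdiff.mp hrST
      have := hSanti t (hT ht) r hrS.1 htr
      exact hrS.2 (this ▸ ht)
  have hDT : CJR (T.sup id) ⊆ T := by
    intro c hc
    obtain ⟨t, ht, hct⟩ := CJR_refines hjsd (rfl : T.sup id = T.sup id) c hc
    have := CJR_chain hc (hTD ht) hct
    exact this ▸ ht
  have hDeq : CJR (T.sup id) = T := Finset.Subset.antisymm hDT hTD
  have := CJR_canonical hjsd (T.sup id)
  rwa [hDeq] at this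

lemma pair_ssubset {A' : Finset α} {x y : α} (h : A' ⊂ ({x, y} : Finset α)) :
    A' ⊆ {x} ∨ A' ⊆ {y} := by
  by_cases hy : y ∈ A'
  · right
    intro t ht
    rcases Finset.mem_insert.mp (h.subset ht) with rfl | ht2
    · exfalso
      apply h.ne
      apply Finset.Subset.antisymm h.subset
      intro z hz
      rcases Finset.mem_insert.mp hz with rfl | hz2
      · exact ht
      · rw [Finset.mem_singleton] at hz2; exact hz2 ▸ hy
    · exact ht2
  · left
    intro t ht
    rcases Finset.mem_insert.mp (h.subset ht) with rfl | ht2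
    · exact Finset.mem_singleton_self t
    · rw [Finset.mem_singleton] at ht2; exact absurd (ht2 ▸ ht) hy

lemma sup_pair {x y : α} : ({x, y} : Finset α).sup id = x ⊔ y := by
  simp

lemma pair_not_le {x y : α} (h : JoinsCanonically ({x, y} : Finset α)) (hne : x ≠ y) :
    ¬ x ≤ y ∧ ¬ y ≤ x := by
  have hsup : ({x, y} : Finset α).sup id = x ⊔ y := sup_pair
  have hirr := h.1.2
  constructor
  · intro hxy
    have hss : ({y} : Finset α) ⊂ ({x, y} : Finset α) := by
      rw [Finset.ssubset_def]
      constructor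
      · intro t ht
        exact Finset.mem_insert.mpr (Or.inr ht)
      · intro hc
        have := hc (Finset.mem_insert_self x {y})
        rw [Finset.mem_singleton] at this
        exact hne this
    have := hirr _ hss
    rw [Finset.sup_singleton, hsup] at this
    rw [id_eq] at this
    exact absurd (sup_eq_right.mpr hxy) (ne_of_gt this)
  · intro hyx
    have hss : ({x} : Finset α) ⊂ ({x, y} : Finset α) := by
      rw [Finset.ssubset_def]
      constructor
      · intro t ht; rw [Finset.mem_singleton] at ht
        exact Finset.mem_insert.mpr (Or.inl ht)
      · intro hc
        have := hc (Finset.mem_insert_of_mem (Finset.mem_singleton_self y))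
        rw [Finset.mem_singleton] at this
        exact hne this.symm
    have := hirr _ hss
    rw [Finset.sup_singleton, hsup] at this
    rw [id_eq] at this
    exact absurd (sup_eq_left.mpr hyx) (ne_of_gt this)

lemma alphaElim (hjsd : JoinSemidistrib α) {j jstar a d : α} (hj : JoinIrred j)
    (hstar : jstar ⋖ j) (hca : JoinsCanonically ({j, a} : Finset α)) (hane : a ≠ j)
    (hda : d ≤ a) (hα : j ≤ jstar ⊔ d) : False := by
  obtain ⟨hja, haj⟩ := pair_not_le hca hane.symm
  have hjya : j ≤ jstar ⊔ a := hα.trans (sup_le_sup_left hda jstar)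
  have hkey : jstar ⊔ a = j ⊔ a :=
    le_antisymm (sup_le (hstar.lt.le.trans le_sup_left) le_sup_right)
      (sup_le hjya le_sup_right)
  have hsupja : ({j, a} : Finset α).sup id = j ⊔ a := sup_pair
  have hirr0 : IrredJoinRep ({jstar, a} : Finset α) (({j, a} : Finset α).sup id) := by
    rw [hsupja]
    constructor
    · rw [sup_pair]; exact hkey
    · intro A' hA'
      have hja' : a < j ⊔ a :=
        lt_of_le_of_ne le_sup_right (fun he => hja (sup_eq_right.mp he.symm))
      rcases pair_ssubset hA' with hsub | hsub
      · calc A'.sup id ≤ ({jstar} : Finset α).sup id := Finset.sup_mono hsub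
          _ = jstar := by simp
          _ < j := hstar.lt
          _ ≤ j ⊔ a := le_sup_left
      · calc A'.sup id ≤ ({a} : Finset α).sup id := Finset.sup_mono hsub
          _ = a := by simp
          _ < j ⊔ a := hja'
  obtain ⟨b, hb, hjb⟩ := hca.2 _ hirr0 j (Finset.mem_insert_self j {a})
  rcases Finset.mem_insert.mp hb with rfl | hb2
  · exact hstar.lt.not_ge hjb
  · rw [Finset.mem_singleton] at hb2
    exact hja (hb2 ▸ hjb)

lemma mainClaim (hjsd : JoinSemidistrib α) (j jstar : α) (hj : JoinIrred j)
    (hstar : jstar ⋖ j) (X : Set α)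
    (hX : ∀ j' : α, j' ∈ X ↔
      JoinIrred j' ∧ j' ≠ j ∧ JoinsCanonically ({j, j'} : Finset α))
    (A : Finset α) (hAX : ↑A ⊆ X)
    (hAmin : ∀ Y : Finset α, ↑Y ⊆ X → IsAntichain (· ≤ ·) (↑Y : Set α) →
      Y.sup id ⊔ j = Y.sup id ⊔ jstar → JoinRefines Y A → Y = A) :
    ∀ w : α, j ≤ jstar ⊔ w → (∃ B : Finset α, B.sup id = w ∧ JoinRefines B A) →
      JoinsCanonically A := by
  intro w
  induction w using WellFoundedLT.induction with
  | _ w IH =>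
  intro h1 h2
  obtain ⟨B, hBsup, hBA⟩ := h2
  have hget : ∀ d ∈ CJR w, ∃ a ∈ A, d ≤ a := by
    intro d hd
    obtain ⟨b, hbB, hdb⟩ := CJR_refines hjsd hBsup d hd
    obtain ⟨a, haA, hba⟩ := hBA b hbB
    exact ⟨a, haA, hdb.trans hba⟩
  have haX : ∀ a ∈ A, JoinIrred a ∧ a ≠ j ∧ JoinsCanonically ({j, a} : Finset α) :=
    fun a haA => (hX a).mp (hAX haA)
  by_cases hcase : ∃ d ∈ CJR w, d ≤ j ⊔ sstar d
  · -- descent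
    obtain ⟨d, hd, hβ⟩ := hcase
    set u : α := ((CJR w).erase d).sup id with hu
    have hdw : d ⊔ u = w := by
      have he : (insert d ((CJR w).erase d)).sup id = w := by
        rw [Finset.insert_erase hd]; exact CJR_sup hjsd w
      rw [Finset.sup_insert] at he
      exact he
    have dmin : ∀ x : α, x ⊔ u = w → d ≤ x := by
      intro x hx
      have hsup' : (insert x ((CJR w).erase d)).sup id = w := by
        rw [Finset.sup_insert]; exact hx
      obtain ⟨v, hv, hdv⟩ := CJR_refines hjsd hsup' d hd
      rcases Finset.mem_insert.mp hv with rfl | hv2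
      · exact hdv
      · exfalso
        exact (Finset.mem_erase.mp hv2).1.symm
          (CJR_chain hd (Finset.mem_of_mem_erase hv2) hdv)
    obtain ⟨a, haA, hda⟩ := hget d hd
    obtain ⟨haJI, hanej, hacan⟩ := haX a haA
    obtain ⟨hja, -⟩ := pair_not_le hacan hanej.symm
    have hdJI : JoinIrred d := CJR_joinIrred hjsd hd
    have hjd : ¬ j ≤ d := fun h => hja (h.trans hda)
    set x : α := jstar ⊔ (sstar d ⊔ u) with hx
    have hxd : x ⊔ d = jstar ⊔ w := by
      rw [← hdw, hx]
      apply le_antisymm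
      · apply sup_le
        · apply sup_le le_sup_left
          apply sup_le
          · exact sstar_le.trans (le_sup_of_le_right le_sup_left)
          · exact le_sup_of_le_right le_sup_right
        · exact le_sup_of_le_right le_sup_left
      · apply sup_le (le_sup_of_le_left le_sup_left)
        apply sup_le le_sup_right
        exact le_sup_of_le_left (le_sup_of_le_right le_sup_right)
    have hjxd : j ≤ x ⊔ d := by rw [hxd]; exact h1
    have hxeq : x ⊔ j = x ⊔ d := by
      apply le_antisymm (sup_le le_sup_left hjxd)
      apply sup_le le_sup_left
      calc d ≤ j ⊔ sstar d := hβ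
        _ ≤ x ⊔ j := sup_le le_sup_right
            ((le_sup_of_le_right le_sup_left : sstar d ≤ x).trans le_sup_left)
    have hjinf : j ⊓ d ≤ jstar := by
      apply lt_le_star hj hstar
      exact lt_of_le_of_ne inf_le_left (fun he => hjd (inf_eq_left.mp he))
    have habs : x ⊔ (j ⊓ d) = x := sup_eq_left.mpr (hjinf.trans le_sup_left)
    have hjx : j ≤ x := by
      have := hjsd x j d hxeq
      rw [habs] at this
      exact le_sup_right.trans this.ge
    have hlt : sstar d ⊔ u < w := by
      apply lt_of_le_of_ne
      · rw [← hdw]; exact sup_le_sup_right sstar_le u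
      · intro heq
        exact (sstar_lt hdJI).not_ge (dmin _ heq)
    have h1' : j ≤ jstar ⊔ (sstar d ⊔ u) := hjx
    have h2' : ∃ B' : Finset α, B'.sup id = sstar d ⊔ u ∧ JoinRefines B' A := by
      refine ⟨insert (sstar d) ((CJR w).erase d), by rw [Finset.sup_insert]; rfl, ?_⟩
      intro y hy
      rcases Finset.mem_insert.mp hy with rfl | hy2
      · exact ⟨a, haA, sstar_le.trans hda⟩
      · exact hget y (Finset.mem_of_mem_erase hy2)
    exact IH _ hlt h1' h2'
  · -- terminal case
    push_neg at hcase
    have hpair : ∀ d ∈ CJR w, JoinsCanonically ({j, d} : Finset α) ∧ d ≠ j := by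
      intro d hd
      obtain ⟨a, haA, hda⟩ := hget d hd
      obtain ⟨haJI, hanej, hacan⟩ := haX a haA
      obtain ⟨hja, -⟩ := pair_not_le hacan hanej.symm
      have hdJI : JoinIrred d := CJR_joinIrred hjsd hd
      have hdnej : d ≠ j := fun h => hja (h ▸ hda)
      have hjd : ¬ j ≤ d := fun h => hja (h.trans hda)
      have hsupjd : ({j, d} : Finset α).sup id = j ⊔ d := sup_pair
      have hrefines : ∀ c ∈ CJR (j ⊔ d), c ≤ j ∨ c ≤ d := by
        intro c hc
        obtain ⟨v, hv, hcv⟩ := CJR_refines hjsd hsupjd c hc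
        rcases Finset.mem_insert.mp hv with rfl | hv2
        · exact Or.inl hcv
        · rw [Finset.mem_singleton] at hv2; exact Or.inr (hv2 ▸ hcv)
      have hjmem : j ∈ CJR (j ⊔ d) := by
        by_contra hjn
        have hle : (CJR (j ⊔ d)).sup id ≤ jstar ⊔ d := by
          apply Finset.sup_le
          intro c hc
          rcases hrefines c hc with h | h
          · have : c < j := lt_of_le_of_ne h (fun he => hjn (he ▸ hc))
            exact (lt_le_star hj hstar this).trans le_sup_left
          · exact h.trans le_sup_right
        rw [CJR_sup hjsd (j ⊔ d)] at hle
        exact alphaElim hjsd hj hstar hacan hanej hda (le_sup_left.trans hle)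
      have hdmem : d ∈ CJR (j ⊔ d) := by
        by_contra hdn
        have hle : (CJR (j ⊔ d)).sup id ≤ j ⊔ sstar d := by
          apply Finset.sup_le
          intro c hc
          rcases hrefines c hc with h | h
          · exact h.trans le_sup_left
          · have : c < d := lt_of_le_of_ne h (fun he => hdn (he ▸ hc))
            exact (le_sstar this).trans le_sup_right
        rw [CJR_sup hjsd (j ⊔ d)] at hle
        exact hcase d hd (le_sup_right.trans hle)
      have heq : CJR (j ⊔ d) = ({j, d} : Finset α) := by
        apply Finset.Subset.antisymm
        · intro c hc
          rcases hrefines c hc with h | h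
          · exact Finset.mem_insert.mpr (Or.inl (CJR_chain hc hjmem h))
          · exact Finset.mem_insert.mpr
              (Or.inr (Finset.mem_singleton.mpr (CJR_chain hc hdmem h)))
        · intro z hz
          rcases Finset.mem_insert.mp hz with rfl | hz2
          · exact hjmem
          · rw [Finset.mem_singleton] at hz2; exact hz2 ▸ hdmem
      have hcanjd := CJR_canonical hjsd (j ⊔ d)
      rw [heq] at hcanjd
      refine ⟨?_, hdnej⟩
      show CanonicalJoinRep ({j, d} : Finset α) (({j, d} : Finset α).sup id)
      rw [hsupjd]
      exact hcanjd
    have hYX : ↑(CJR w) ⊆ X := by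
      intro d hd
      rw [Finset.mem_coe] at hd
      exact (hX d).mpr ⟨CJR_joinIrred hjsd hd, (hpair d hd).2, (hpair d hd).1⟩
    have hYanti : IsAntichain (· ≤ ·) (↑(CJR w) : Set α) := by
      intro p hp q hq hne hle
      rw [Finset.mem_coe] at hp hq
      exact hne (CJR_chain hp hq hle)
    have hYeq : (CJR w).sup id ⊔ j = (CJR w).sup id ⊔ jstar := by
      rw [CJR_sup hjsd w]
      apply le_antisymm
      · exact sup_le le_sup_left (h1.trans (by rw [sup_comm]))
      · exact sup_le le_sup_left (hstar.lt.le.trans le_sup_right)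
    have hYref : JoinRefines (CJR w) A := fun y hy => hget y hy
    have hYA := hAmin (CJR w) hYX hYanti hYeq hYref
    show CanonicalJoinRep A (A.sup id)
    rw [← hYA, CJR_sup hjsd w]
    exact CJR_canonical hjsd w

end AuxProof

/-- Lemma (edges): with `A` as in the previous lemma, every two-element subset of `A` is a
face of the canonical join complex. -/
theorem stmt_14 {α : Type*} [Lattice α] [OrderBot α] [Fintype α] [DecidableEq α]
    (hjsd : JoinSemidistrib α) (j jstar : α) (hj : JoinIrred j) (hstar : jstar ⋖ j)
    (hk : ¬ ∃ m : α, IsGreatest {a : α | jstar ≤ a ∧ ¬ j ≤ a} m)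
    (X : Set α)
    (hX : ∀ j' : α, j' ∈ X ↔
      JoinIrred j' ∧ j' ≠ j ∧ JoinsCanonically ({j, j'} : Finset α))
    (A : Finset α) (hAne : A.Nonempty) (hAX : ↑A ⊆ X)
    (hAanti : IsAntichain (· ≤ ·) (↑A : Set α))
    (hAeq : A.sup id ⊔ j = A.sup id ⊔ jstar)
    (hAmin : ∀ Y : Finset α, ↑Y ⊆ X → IsAntichain (· ≤ ·) (↑Y : Set α) →
      Y.sup id ⊔ j = Y.sup id ⊔ jstar → JoinRefines Y A → Y = A) :
    ∀ a ∈ A, ∀ a' ∈ A, a ≠ a' → JoinsCanonically ({a, a'} : Finset α) := by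
  intro a ha a' ha' hne
  have h1 : j ≤ jstar ⊔ A.sup id := by
    have h0 : j ≤ A.sup id ⊔ j := le_sup_right
    rw [hAeq] at h0
    exact h0.trans (by rw [sup_comm])
  have hAcan : JoinsCanonically A :=
    mainClaim hjsd j jstar hj hstar X hX A hAX hAmin (A.sup id) h1
      ⟨A, rfl, fun b hb => ⟨b, hb, le_rfl⟩⟩
  apply subset_joinsCanonically hjsd hAcan
  intro t ht
  rcases Finset.mem_insert.mp ht with rfl | ht2
  · exact ha
  · rw [Finset.mem_singleton] at ht2; exact ht2 ▸ ha'
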